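/- Let H and Q be Hilbert spaces, a : H × H → ℝ and b : H × Q → ℝ bounded bilinear forms, F ∈ H', G ∈ Q'. Assume (1) coercivity: there exists α > 0 with a(τ,τ) ≥ α‖τ‖²_H for all τ ∈ H; (2) inf-sup condition: there exists β > 0 with inf_{0≠v∈Q} sup_{0≠τ∈H} b(τ,v)/(‖τ‖_H ‖v‖_Q) ≥ β. Then the saddle-point problem a(σ,τ) + b(τ,u) = F(τ) for all τ ∈ H, b(σ,v) = G(v) for all v ∈ Q, has a unique solution (σ,u) ∈ H × Q, and ‖σ‖_H + ‖u‖_Q ≤ C(‖F‖_{H'} + ‖G‖_{Q'}) with C depending only on ‖a‖, α, β. -/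

import Mathlib

open InnerProductSpace ContinuousLinearMap

/-- The Riesz adjoint of a bilinear form `b : H × Q → ℝ`: the map `Q →L[ℝ] H`
sending `v` to the Riesz representative of `τ ↦ b τ v`. -/
noncomputable def rieszAdj {H Q : Type*} [NormedAddCommGroup H] [InnerProductSpace ℝ H]
    [CompleteSpace H] [NormedAddCommGroup Q] [InnerProductSpace ℝ Q]
    (b : H →L[ℝ] Q →L[ℝ] ℝ) : Q →L[ℝ] H where
  toFun v := (InnerProductSpace.toDual ℝ H).symm (b.flip v)
  map_add' v w := by simp
  map_smul' r v := by simp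
  cont := (InnerProductSpace.toDual ℝ H).symm.continuous.comp b.flip.continuous

lemma inner_rieszAdj {H Q : Type*} [NormedAddCommGroup H] [InnerProductSpace ℝ H]
    [CompleteSpace H] [NormedAddCommGroup Q] [InnerProductSpace ℝ Q]
    (b : H →L[ℝ] Q →L[ℝ] ℝ) (v : Q) (τ : H) :
    ⟪rieszAdj b v, τ⟫_ℝ = b τ v := by
  simp [rieszAdj, InnerProductSpace.toDual_symm_apply]

set_option maxHeartbeats 1000000

/-- the Babuška–Brezzi theorem for mixed saddle-point problems. -/
theorem babuska_brezzi
    (H Q : Type*) [NormedAddCommGroup H] [InnerProductSpace ℝ H] [CompleteSpace H]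
    [NormedAddCommGroup Q] [InnerProductSpace ℝ Q] [CompleteSpace Q]
    (a : H →L[ℝ] H →L[ℝ] ℝ) (b : H →L[ℝ] Q →L[ℝ] ℝ)
    (α : ℝ) (hα : 0 < α) (hcoer : ∀ τ : H, α * ‖τ‖ ^ 2 ≤ a τ τ)
    (β : ℝ) (hβ : 0 < β)
    (hinfsup : ∀ v : Q, v ≠ 0 → β * ‖v‖ ≤ ⨆ τ : {τ : H // τ ≠ 0}, b τ.1 v / ‖τ.1‖) :
    ∃ C : ℝ, 0 < C ∧ ∀ (F : H →L[ℝ] ℝ) (G : Q →L[ℝ] ℝ),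
      (∃! p : H × Q, (∀ τ : H, a p.1 τ + b τ p.2 = F τ) ∧ (∀ v : Q, b p.1 v = G v)) ∧
      ∀ p : H × Q, ((∀ τ : H, a p.1 τ + b τ p.2 = F τ) ∧ (∀ v : Q, b p.1 v = G v)) →
        ‖p.1‖ + ‖p.2‖ ≤ C * (‖F‖ + ‖G‖) := by
  classical
  -- `a` is coercive
  have hA : IsCoercive a := ⟨α, hα, fun u => by have := hcoer u; nlinarith⟩
  set eA := hA.continuousLinearEquivOfBilin with heA
  set eAs : H →L[ℝ] H := (eA.symm : H →L[ℝ] H) with heAs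
  set Bs : Q →L[ℝ] H := rieszAdj b with hBsdef
  have hBs : ∀ (v : Q) (τ : H), ⟪Bs v, τ⟫_ℝ = b τ v := inner_rieszAdj b
  have heAa : ∀ σ τ : H, ⟪eA σ, τ⟫_ℝ = a σ τ := hA.continuousLinearEquivOfBilin_apply
  clear_value eA
  -- lower bound from the inf-sup condition
  have hlow : ∀ v : Q, β * ‖v‖ ≤ ‖Bs v‖ := by
    intro v
    rcases eq_or_ne v 0 with rfl | hv
    · simp
    · refine le_trans (hinfsup v hv) (Real.iSup_le ?_ (norm_nonneg _))
      rintro ⟨τ, hτ⟩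
      rw [← hBs]
      rw [div_le_iff₀ (norm_pos_iff.mpr hτ)]
      exact real_inner_le_norm _ _
  -- the Schur-complement bilinear form
  set c : Q →L[ℝ] Q →L[ℝ] ℝ := b.comp (eAs.comp Bs) with hcdef
  have hcapp : ∀ u v : Q, c u v = b (eAs (Bs u)) v := fun u v => rfl
  set M : ℝ := max ‖(eA : H →L[ℝ] H)‖ 1 with hMdef
  have hM : 0 < M := lt_of_lt_of_le one_pos (le_max_right _ _)
  have hc : IsCoercive c := by
    refine ⟨α * β ^ 2 / M ^ 2, by positivity, fun v => ?_⟩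
    set τ : H := eAs (Bs v) with hτdef
    have h1 : c v v = a τ τ := by
      rw [hcapp, ← heAa, ← hτdef]
      have : eA τ = Bs v := by
        simp [hτdef, heAs]
      rw [this, hBs]
    have h2 : ‖Bs v‖ ≤ M * ‖τ‖ := by
      have heq : eA τ = Bs v := by simp [hτdef, heAs]
      rw [← heq]
      calc ‖eA τ‖ = ‖(eA : H →L[ℝ] H) τ‖ := by
            rw [ContinuousLinearEquiv.coe_coe]
        _ ≤ ‖(eA : H →L[ℝ] H)‖ * ‖τ‖ := (eA : H →L[ℝ] H).le_opNorm τ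
        _ ≤ M * ‖τ‖ := by gcongr; exact le_max_left _ _
    clear_value τ M
    have h3 : β * ‖v‖ ≤ M * ‖τ‖ := (hlow v).trans h2
    have h4 : α * ‖τ‖ ^ 2 ≤ a τ τ := hcoer τ
    rw [h1]
    have hβv : 0 ≤ β * ‖v‖ := by positivity
    have : (β * ‖v‖) ^ 2 ≤ (M * ‖τ‖) ^ 2 := by nlinarith
    rw [div_mul_eq_mul_div, div_mul_eq_mul_div, div_le_iff₀ (by positivity)]
    nlinarith
  set eS := hc.continuousLinearEquivOfBilin with heS
  set eSs : Q →L[ℝ] Q := (eS.symm : Q →L[ℝ] Q) with heSs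
  have heSc : ∀ u v : Q, ⟪eS u, v⟫_ℝ = c u v := hc.continuousLinearEquivOfBilin_apply
  clear_value eS
  -- constants
  set K : ℝ := ‖eSs‖ * (‖b‖ * ‖eAs‖ + 1) with hK
  set C : ℝ := 1 + K + ‖eAs‖ * (1 + ‖Bs‖ * K) with hC
  have hKnn : 0 ≤ K := by positivity
  refine ⟨C, by positivity, fun F G => ?_⟩
  -- Riesz representatives
  set rF : H := (InnerProductSpace.toDual ℝ H).symm F with hrF
  have hrFapp : ∀ τ : H, ⟪rF, τ⟫_ℝ = F τ := fun τ => InnerProductSpace.toDual_symm_apply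
  set h : Q →L[ℝ] ℝ := (b (eAs rF)) - G with hh
  set rh : Q := (InnerProductSpace.toDual ℝ Q).symm h with hrh
  have hrhapp : ∀ v : Q, ⟪rh, v⟫_ℝ = h v := fun v => InnerProductSpace.toDual_symm_apply
  set u₀ : Q := eS.symm rh with hu₀
  set σ₀ : H := eA.symm (rF - Bs u₀) with hσ₀
  -- characterization of solutions
  have hchar : ∀ p : H × Q,
      ((∀ τ : H, a p.1 τ + b τ p.2 = F τ) ∧ (∀ v : Q, b p.1 v = G v)) ↔ p = (σ₀, u₀) := by
    rintro ⟨σ, u⟩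
    constructor
    · rintro ⟨h1, h2⟩
      have e1 : eA σ + Bs u = rF := by
        refine ext_inner_right ℝ fun τ => ?_
        rw [inner_add_left, heAa, hBs, hrFapp]
        exact h1 τ
      have hσ : σ = eA.symm (rF - Bs u) := by
        have : eA σ = rF - Bs u := by rw [← e1]; abel
        rw [← this, ContinuousLinearEquiv.symm_apply_apply]
      have e2 : eS u = rh := by
        refine ext_inner_right ℝ fun v => ?_
        rw [heSc, hrhapp, hh]
        have hbσ : b σ v = G v := h2 v
        rw [hσ] at hbσ
        have expand : b (eA.symm (rF - Bs u)) v
            = b (eAs rF) v - c u v := by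
          rw [hcapp]
          rw [← hBs, ← hBs, ← hBs]
          have : (eA.symm (rF - Bs u) : H) = eAs rF - eAs (Bs u) := by
            simp [heAs]
          rw [this, inner_sub_right]
        rw [expand] at hbσ
        simp only [ContinuousLinearMap.sub_apply]
        linarith
      have hu : u = u₀ := by
        rw [hu₀, ← e2, ContinuousLinearEquiv.symm_apply_apply]
      have hσ' : σ = σ₀ := by rw [hσ, hu, hσ₀]
      simp [hσ', hu, Prod.ext_iff]
    · rintro hp
      have hσ : σ = σ₀ := congrArg Prod.fst hp
      have hu : u = u₀ := congrArg Prod.snd hp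
      subst hσ; subst hu
      have e2 : eS u₀ = rh := by rw [hu₀, ContinuousLinearEquiv.apply_symm_apply]
      have e1 : eA σ₀ = rF - Bs u₀ := by rw [hσ₀, ContinuousLinearEquiv.apply_symm_apply]
      constructor
      · intro τ
        rw [← heAa, ← hBs, ← hrFapp, e1, inner_sub_left]
        ring
      · intro v
        have expand : b σ₀ v = b (eAs rF) v - c u₀ v := by
          rw [hcapp, ← hBs, ← hBs, ← hBs, hσ₀]
          have : (eA.symm (rF - Bs u₀) : H) = eAs rF - eAs (Bs u₀) := by
            simp [heAs]
          rw [this, inner_sub_right]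
        rw [expand, ← heSc, e2, hrhapp, hh]
        simp
    -- end characterization
  constructor
  · exact ⟨(σ₀, u₀), (hchar (σ₀, u₀)).mpr rfl, fun p hp => (hchar p).mp hp⟩
  · intro p hp
    have hpe := (hchar p).mp hp
    subst hpe
    simp only
    -- bounds
    have hFnn : (0:ℝ) ≤ ‖F‖ := norm_nonneg _
    have hGnn : (0:ℝ) ≤ ‖G‖ := norm_nonneg _
    have hrFnorm : ‖rF‖ = ‖F‖ := by
      rw [hrF]; exact LinearIsometryEquiv.norm_map _ F
    have hrhnorm : ‖rh‖ = ‖h‖ := by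
      rw [hrh]; exact LinearIsometryEquiv.norm_map _ h
    set S : ℝ := ‖F‖ + ‖G‖ with hSdef
    have hSnn : (0:ℝ) ≤ S := by positivity
    have hb1 : ‖b (eAs rF)‖ ≤ ‖b‖ * ‖eAs‖ * ‖F‖ := by
      calc ‖b (eAs rF)‖ ≤ ‖b‖ * ‖eAs rF‖ := b.le_opNorm _
        _ ≤ ‖b‖ * (‖eAs‖ * ‖rF‖) := by gcongr ‖b‖ * ?_; exact eAs.le_opNorm rF
        _ = ‖b‖ * ‖eAs‖ * ‖F‖ := by rw [hrFnorm]; ring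
    have hhnorm : ‖h‖ ≤ ‖b‖ * ‖eAs‖ * ‖F‖ + ‖G‖ :=
      (norm_sub_le _ _).trans (add_le_add_left hb1 _)
    have hu₀norm : ‖u₀‖ ≤ K * S := by
      have h1 : ‖u₀‖ ≤ ‖eSs‖ * ‖rh‖ := by
        have he : u₀ = eSs rh := rfl
        rw [he]; exact eSs.le_opNorm rh
      have h2 : (0:ℝ) ≤ ‖b‖ * ‖eAs‖ := by positivity
      have h3 : (0:ℝ) ≤ ‖b‖ * ‖eAs‖ * ‖G‖ := by positivity
      calc ‖u₀‖ ≤ ‖eSs‖ * ‖h‖ := by rw [← hrhnorm]; exact h1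
        _ ≤ ‖eSs‖ * (‖b‖ * ‖eAs‖ * ‖F‖ + ‖G‖) := by
              gcongr ‖eSs‖ * ?_
        _ ≤ ‖eSs‖ * ((‖b‖ * ‖eAs‖ + 1) * S) := by
              gcongr ‖eSs‖ * ?_
              rw [hSdef]
              linarith
        _ = K * S := by rw [hK]; ring
    have hσ₀norm : ‖σ₀‖ ≤ ‖eAs‖ * (‖F‖ + ‖Bs‖ * ‖u₀‖) := by
      have h1 : σ₀ = eAs (rF - Bs u₀) := rfl
      calc ‖σ₀‖ ≤ ‖eAs‖ * ‖rF - Bs u₀‖ := by rw [h1]; exact eAs.le_opNorm _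
        _ ≤ ‖eAs‖ * (‖rF‖ + ‖Bs u₀‖) := by
              gcongr ‖eAs‖ * ?_; exact norm_sub_le _ _
        _ ≤ ‖eAs‖ * (‖F‖ + ‖Bs‖ * ‖u₀‖) := by
              rw [hrFnorm]
              gcongr ‖eAs‖ * (‖F‖ + ?_)
              exact Bs.le_opNorm u₀
    have hFS : ‖F‖ ≤ S := le_add_of_nonneg_right hGnn
    have t2 : ‖F‖ + ‖Bs‖ * ‖u₀‖ ≤ S + ‖Bs‖ * (K * S) := by
      have t1 : ‖Bs‖ * ‖u₀‖ ≤ ‖Bs‖ * (K * S) := by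
        gcongr ‖Bs‖ * ?_
      exact add_le_add hFS t1
    have t3 : ‖σ₀‖ ≤ ‖eAs‖ * (S + ‖Bs‖ * (K * S)) := by
      refine hσ₀norm.trans ?_
      gcongr ‖eAs‖ * ?_
    calc ‖σ₀‖ + ‖u₀‖ ≤ ‖eAs‖ * (S + ‖Bs‖ * (K * S)) + K * S := add_le_add t3 hu₀norm
      _ = (K + ‖eAs‖ * (1 + ‖Bs‖ * K)) * S := by ring
      _ ≤ C * S := by
          have hle : K + ‖eAs‖ * (1 + ‖Bs‖ * K) ≤ C := by rw [hC]; linarith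
          exact mul_le_mul_of_nonneg_right hle hSnn
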